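/- The function Δ : (0,∞) → ℝ is strictly increasing, i.e., for all real numbers 0 < s < t one has Δ(s) < Δ(t). -/

import Mathlib

noncomputable section

/-- The hyperbolic Kepler function `f_{g,L}(S) = S - g·arcsinh(S) - L`. -/
def fhk (g L : ℝ) : ℝ → ℝ := fun S => S - g * Real.arsinh S - L

/-- `β(f,z) = |f(z)/f'(z)|`. -/
def betaFn (f : ℝ → ℝ) (z : ℝ) : ℝ := |f z / deriv f z|

/-- `γ(f,z) = sup_{k ≥ 2} |f^{(k)}(z)/(k!·f'(z))|^{1/(k-1)}`. -/
def gammaFn (f : ℝ → ℝ) (z : ℝ) : ℝ :=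
  sSup {y : ℝ | ∃ k : ℕ, 2 ≤ k ∧
    y = |iteratedDeriv k f z / (Nat.factorial k * deriv f z)| ^ ((1 : ℝ) / ((k : ℝ) - 1))}

/-- `α(f,z) = β(f,z)·γ(f,z)`. -/
def alphaFn (f : ℝ → ℝ) (z : ℝ) : ℝ := betaFn f z * gammaFn f z

/-- Smale's constant (improved by Wang–Han): `α₀ = 3 - 2√2`. -/
def alpha0 : ℝ := 3 - 2 * Real.sqrt 2

/-- `z` is an approximate zero of `f` when `α(f,z) < α₀`. -/
def ApproxZero (f : ℝ → ℝ) (z : ℝ) : Prop := alphaFn f z < alpha0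

/-- The half-width `Δ(S₀)` of the stripe `R₃(S₀)` of Theorem 3.1. -/
def Delta (S₀ : ℝ) : ℝ :=
  if S₀ ≤ Real.sqrt 7 / 3 then
    Real.sqrt 3 * alpha0 * S₀ ^ 3 * Real.sqrt (1 + S₀ ^ 2) /
      (2 * (Real.sqrt (1 + S₀ ^ 2) + 1) ^ ((3 : ℝ) / 2))
  else
    alpha0 * S₀ * min 1 S₀ * Real.sqrt (1 + S₀ ^ 2) /
      (2 * (Real.sqrt (1 + S₀ ^ 2) + 1))

/- ### Auxiliary lemmas -/

lemma alpha0_pos : 0 < alpha0 := by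
  have h : Real.sqrt 2 < 3/2 := by
    rw [Real.sqrt_lt' (by norm_num)]; norm_num
  unfold alpha0; linarith

lemma one_lt_u {S : ℝ} (hS : 0 < S) : 1 < Real.sqrt (1 + S^2) := by
  rw [Real.lt_sqrt (by norm_num)]
  nlinarith

lemma u_lt_u {s t : ℝ} (hs : 0 ≤ s) (hst : s < t) :
    Real.sqrt (1 + s^2) < Real.sqrt (1 + t^2) :=
  Real.sqrt_lt_sqrt (by positivity) (by nlinarith)

lemma c_lt_one' : Real.sqrt 7 / 3 < 1 := by
  have : Real.sqrt 7 < 3 := by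
    rw [Real.sqrt_lt' (by norm_num)]; norm_num
  linarith

lemma c_pos' : 0 < Real.sqrt 7 / 3 := by positivity

lemma rpow32 {x : ℝ} (hx : 0 ≤ x) : x ^ ((3:ℝ)/2) = x * Real.sqrt x := by
  rw [show ((3:ℝ)/2) = (3:ℝ) * (1/2) by norm_num, Real.rpow_mul hx,
    show ((3:ℝ)) = ((3:ℕ):ℝ) by norm_num, Real.rpow_natCast, ← Real.sqrt_eq_rpow,
    show x^(3:ℕ) = (x*x)*x by ring, Real.sqrt_mul (by positivity),
    Real.sqrt_mul_self hx]

/-- Representation of `Delta` on the first branch. -/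
lemma Delta_eq_one {S : ℝ} (h0 : 0 < S) (hS : S ≤ Real.sqrt 7 / 3) :
    Delta S = Real.sqrt 3 * alpha0 / 2 *
      ((Real.sqrt (1 + S^2) - 1) * Real.sqrt (Real.sqrt (1 + S^2) - 1) * Real.sqrt (1 + S^2)) := by
  rw [Delta, if_pos hS]
  set u := Real.sqrt (1 + S^2) with hu
  have hu2 : u^2 = 1 + S^2 := Real.sq_sqrt (by positivity)
  have hu1 : 1 < u := one_lt_u h0
  have hS_eq : S = Real.sqrt (u-1) * Real.sqrt (u+1) := by
    rw [← Real.sqrt_mul (by linarith), show (u-1)*(u+1) = u^2 - 1 by ring, hu2,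
      show 1 + S^2 - 1 = S^2 by ring, Real.sqrt_sq h0.le]
  have hq1 : Real.sqrt (u-1) ^ 2 = u - 1 := Real.sq_sqrt (by linarith)
  have hq2 : Real.sqrt (u+1) ^ 2 = u + 1 := Real.sq_sqrt (by linarith)
  have hq2p : 0 < Real.sqrt (u+1) := Real.sqrt_pos.2 (by linarith)
  have hcube : (Real.sqrt (u-1) * Real.sqrt (u+1))^3
      = (u-1)*(u+1)*(Real.sqrt (u-1)*Real.sqrt (u+1)) := by
    calc (Real.sqrt (u-1) * Real.sqrt (u+1))^3
        = (Real.sqrt (u-1)^2) * (Real.sqrt (u+1)^2) * (Real.sqrt (u-1)*Real.sqrt (u+1)) := by ring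
      _ = (u-1)*(u+1)*(Real.sqrt (u-1)*Real.sqrt (u+1)) := by rw [hq1, hq2]
  rw [rpow32 (by linarith), hS_eq, hcube]
  field_simp

/-- Representation of `Delta` on the middle region. -/
lemma Delta_eq_two {S : ℝ} (h0 : Real.sqrt 7 / 3 ≤ S) (hS : S ≤ 1) :
    Delta S = alpha0 / 2 * ((Real.sqrt (1 + S^2) - 1) * Real.sqrt (1 + S^2)) := by
  have hc : 0 < Real.sqrt 7 / 3 := c_pos'
  have hpos : 0 < S := lt_of_lt_of_le hc h0
  rcases eq_or_lt_of_le h0 with h | h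
  · subst h
    have h7 : Real.sqrt 7 ^ 2 = 7 := Real.sq_sqrt (by norm_num)
    have hu : Real.sqrt (1 + (Real.sqrt 7 / 3)^2) = 4/3 := by
      rw [show 1 + (Real.sqrt 7 / 3)^2 = 1 + Real.sqrt 7 ^2 / 9 by ring, h7,
        show (1 : ℝ) + 7/9 = (4/3)^2 by norm_num, Real.sqrt_sq (by norm_num)]
    rw [Delta_eq_one hc le_rfl, hu]
    have h13 : Real.sqrt 3 * Real.sqrt (4/3 - 1) = 1 := by
      rw [← Real.sqrt_mul (by norm_num), show (3:ℝ) * (4/3-1) = 1 by norm_num, Real.sqrt_one]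
    calc Real.sqrt 3 * alpha0 / 2 * ((4/3 - 1) * Real.sqrt ((4:ℝ)/3 - 1) * (4/3))
        = (Real.sqrt 3 * Real.sqrt ((4:ℝ)/3 - 1)) * (alpha0 / 2 * ((4/3-1) * (4/3))) := by ring
      _ = alpha0 / 2 * ((4/3 - 1) * (4/3)) := by rw [h13]; ring
  · rw [Delta, if_neg (not_le.2 h), min_eq_right hS]
    set u := Real.sqrt (1 + S^2) with hud
    have hu2 : u^2 = 1 + S^2 := Real.sq_sqrt (by positivity)
    have hu1 : 1 < u := one_lt_u hpos
    field_simp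
    linear_combination (-alpha0)*hu2

/-- Representation of `Delta` on the region `S ≥ 1`. -/
lemma Delta_eq_three {S : ℝ} (hS : 1 ≤ S) :
    Delta S = alpha0 / 2 * (S * Real.sqrt (1 + S^2) / (Real.sqrt (1 + S^2) + 1)) := by
  have h : ¬ S ≤ Real.sqrt 7 / 3 := not_le.2 (lt_of_lt_of_le c_lt_one' hS)
  rw [Delta, if_neg h, min_eq_left hS]
  have hu1 : 1 < Real.sqrt (1 + S^2) := one_lt_u (by linarith)
  field_simp

/-- Strict monotonicity on `(0, √7/3]`. -/
lemma mono_one {s t : ℝ} (hs : 0 < s) (hst : s < t) (ht : t ≤ Real.sqrt 7 / 3) :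
    Delta s < Delta t := by
  have hsc : s ≤ Real.sqrt 7 / 3 := le_of_lt (lt_of_lt_of_le hst ht)
  rw [Delta_eq_one hs hsc, Delta_eq_one (lt_trans hs hst) ht]
  set a := Real.sqrt (1 + s^2) with ha
  set b := Real.sqrt (1 + t^2) with hb
  have ha1 : 1 < a := one_lt_u hs
  have hab : a < b := u_lt_u hs.le hst
  have hK : 0 < Real.sqrt 3 * alpha0 / 2 := by
    have := alpha0_pos
    have h3 : 0 < Real.sqrt 3 := Real.sqrt_pos.2 (by norm_num)
    positivity
  apply mul_lt_mul_of_pos_left _ hK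
  have hsq : Real.sqrt (a - 1) < Real.sqrt (b - 1) :=
    Real.sqrt_lt_sqrt (by linarith) (by linarith)
  have h1 : (a - 1) * Real.sqrt (a - 1) < (b - 1) * Real.sqrt (b - 1) :=
    mul_lt_mul'' (by linarith) hsq (by linarith) (Real.sqrt_nonneg _)
  exact mul_lt_mul'' h1 hab
    (mul_nonneg (by linarith) (Real.sqrt_nonneg _)) (by linarith)

/-- Strict monotonicity on `[√7/3, 1]`. -/
lemma mono_two {s t : ℝ} (hs : Real.sqrt 7 / 3 ≤ s) (hst : s < t) (ht : t ≤ 1) :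
    Delta s < Delta t := by
  have hs0 : 0 < s := lt_of_lt_of_le c_pos' hs
  rw [Delta_eq_two hs (le_of_lt (lt_of_lt_of_le hst ht)),
    Delta_eq_two (le_trans hs hst.le) ht]
  set a := Real.sqrt (1 + s^2) with ha
  set b := Real.sqrt (1 + t^2) with hb
  have ha1 : 1 < a := one_lt_u hs0
  have hab : a < b := u_lt_u hs0.le hst
  have hK : 0 < alpha0 / 2 := by have := alpha0_pos; positivity
  apply mul_lt_mul_of_pos_left _ hK
  exact mul_lt_mul'' (by linarith) hab (by linarith) (by linarith)

/-- Strict monotonicity on `[1, ∞)`. -/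
lemma mono_three {s t : ℝ} (hs : 1 ≤ s) (hst : s < t) : Delta s < Delta t := by
  rw [Delta_eq_three hs, Delta_eq_three (le_of_lt (lt_of_le_of_lt hs hst))]
  set a := Real.sqrt (1 + s^2) with ha
  set b := Real.sqrt (1 + t^2) with hb
  have ha1 : 1 < a := one_lt_u (by linarith)
  have hab : a < b := u_lt_u (by linarith) hst
  have hK : 0 < alpha0 / 2 := by have := alpha0_pos; positivity
  apply mul_lt_mul_of_pos_left _ hK
  rw [div_lt_div_iff₀ (by linarith) (by linarith)]
  have h1 : s * a < t * b := mul_lt_mul'' hst hab (by linarith) (by linarith)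
  have h2 : s * (a * b) < t * (a * b) :=
    mul_lt_mul_of_pos_right hst (mul_pos (by linarith) (by linarith))
  nlinarith [h1, h2]

/-- Lemma 3.3: the function `Δ` is strictly increasing on `(0,∞)`. -/
theorem Delta_strictMono (s t : ℝ) (hs : 0 < s) (hst : s < t) : Delta s < Delta t := by
  rcases le_or_gt t (Real.sqrt 7 / 3) with h1 | h1
  · exact mono_one hs hst h1
  · rcases le_or_gt t 1 with h2 | h2
    · rcases le_or_gt (Real.sqrt 7 / 3) s with h3 | h3
      · exact mono_two h3 hst h2
      · exact lt_trans (mono_one hs h3 le_rfl) (mono_two le_rfl h1 h2)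
    · rcases le_or_gt 1 s with h3 | h3
      · exact mono_three h3 hst
      · have last := mono_three le_rfl h2
        rcases le_or_gt (Real.sqrt 7 / 3) s with h4 | h4
        · exact lt_trans (mono_two h4 h3 le_rfl) last
        · exact lt_trans (mono_one hs h4 le_rfl)
            (lt_trans (mono_two le_rfl c_lt_one' le_rfl) last)
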